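/- Fix q ≥ 2 and q ≤ i ≤ n. Let j' be the largest j in {q−1,...,i−1} minimizing max( M(q−1, j−1), R_{j(i−1)} ), and let j'' be the largest j in {q−1,...,i} minimizing max( M(q−1, j−1), R_{ji} ). Then j'' ≥ j'. -/

import Mathlib

/-- Maximum of `f` over a finite set of indices, with the empty maximum being `0`. -/
noncomputable def maxOver (S : Finset ℕ) (f : ℕ → ℝ) : ℝ := S.fold max 0 f

/-- Left evacuation time to sink `x t` of the subpath starting at `x l`, under weights `w`. -/
noncomputable def thetaL (x : ℕ → ℝ) (τ : ℝ) (w : ℕ → ℝ) (l t : ℕ) : ℝ :=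
  maxOver (Finset.Ico l t) (fun i => (x t - x i) * τ + ∑ j ∈ Finset.Icc l i, w j)

/-- Right evacuation time to sink `x t` of the subpath ending at `x r`, under weights `w`. -/
noncomputable def thetaR (x : ℕ → ℝ) (τ : ℝ) (w : ℕ → ℝ) (t r : ℕ) : ℝ :=
  maxOver (Finset.Ioc t r) (fun i => (x i - x t) * τ + ∑ j ∈ Finset.Icc i r, w j)

/-- 1-sink evacuation time `Θ¹([x_l,x_r], x_t, w)`. -/
noncomputable def theta1 (x : ℕ → ℝ) (τ : ℝ) (w : ℕ → ℝ) (l t r : ℕ) : ℝ :=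
  max (thetaL x τ w l t) (thetaR x τ w t r)

/-- A scenario assigns each vertex a weight within its bounds. -/
def IsScenario (n : ℕ) (wlo whi : ℕ → ℝ) (s : ℕ → ℝ) : Prop :=
  ∀ i, i ≤ n → wlo i ≤ s i ∧ s i ≤ whi i

/-- A `k`-partition-with-sinks of the vertex set `{0,…,n}` into `k` consecutive
nonempty blocks `{l p, …, r p}` (`p ∈ {1,…,k}`) with a sink `t p` in each block. -/
structure KPartSinks (n k : ℕ) where
  l : ℕ → ℕ
  r : ℕ → ℕ
  t : ℕ → ℕ
  first : l 1 = 0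
  last : r k = n
  consec : ∀ p, 1 ≤ p → p < k → l (p + 1) = r p + 1
  block_nonempty : ∀ p, 1 ≤ p → p ≤ k → l p ≤ r p
  sink_lb : ∀ p, 1 ≤ p → p ≤ k → l p ≤ t p
  sink_ub : ∀ p, 1 ≤ p → p ≤ k → t p ≤ r p

/-- `k`-sink evacuation time `Θᵏ(P, {P̂,Ŷ}, w)`. -/
noncomputable def thetaK {n k : ℕ} (x : ℕ → ℝ) (τ : ℝ) (PY : KPartSinks n k) (w : ℕ → ℝ) : ℝ :=
  maxOver (Finset.Icc 1 k) (fun p => theta1 x τ w (PY.l p) (PY.t p) (PY.r p))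

/-- Optimal `k`-sink evacuation time `Θᵏ_opt(P, w)`. -/
noncomputable def thetaOpt (x : ℕ → ℝ) (τ : ℝ) (n k : ℕ) (w : ℕ → ℝ) : ℝ :=
  sInf {v : ℝ | ∃ PY : KPartSinks n k, thetaK x τ PY w = v}

/-- Regret `R({P̂,Ŷ}, w)`. -/
noncomputable def regret {n k : ℕ} (x : ℕ → ℝ) (τ : ℝ) (PY : KPartSinks n k) (w : ℕ → ℝ) : ℝ :=
  thetaK x τ PY w - thetaOpt x τ n k w

/-- Max-regret `R_max({P̂,Ŷ})`. -/
noncomputable def maxRegret {n k : ℕ} (x : ℕ → ℝ) (τ : ℝ) (wlo whi : ℕ → ℝ)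
    (PY : KPartSinks n k) : ℝ :=
  sSup {v : ℝ | ∃ s : ℕ → ℝ, IsScenario n wlo whi s ∧ regret x τ PY s = v}

/-- A worst-case scenario: a scenario attaining the max-regret. -/
def IsWorstCase {n k : ℕ} (x : ℕ → ℝ) (τ : ℝ) (wlo whi : ℕ → ℝ) (PY : KPartSinks n k)
    (s : ℕ → ℝ) : Prop :=
  IsScenario n wlo whi s ∧ regret x τ PY s = maxRegret x τ wlo whi PY

/-- `d` is the index of the dominant part of `{P̂,Ŷ}` under weights `w`:
the smallest index attaining `max_p Θ¹(P_p, y_p, w)`. -/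
def IsDominant {n k : ℕ} (x : ℕ → ℝ) (τ : ℝ) (PY : KPartSinks n k) (w : ℕ → ℝ) (d : ℕ) : Prop :=
  1 ≤ d ∧ d ≤ k ∧
  (∀ p, 1 ≤ p → p ≤ k →
    theta1 x τ w (PY.l p) (PY.t p) (PY.r p) ≤ theta1 x τ w (PY.l d) (PY.t d) (PY.r d)) ∧
  (∀ p, 1 ≤ p → p < d →
    theta1 x τ w (PY.l p) (PY.t p) (PY.r p) < theta1 x τ w (PY.l d) (PY.t d) (PY.r d))

/-- `R_{lr}(x_t)`: the max-regret of the subpath `[x_l,x_r]` as assumed dominant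
part with sink `x_t`. -/
noncomputable def Rsink (x : ℕ → ℝ) (τ : ℝ) (wlo whi : ℕ → ℝ) (n k : ℕ) (l r t : ℕ) : ℝ :=
  sSup {v : ℝ | ∃ s : ℕ → ℝ, IsScenario n wlo whi s ∧
    theta1 x τ s l t r - thetaOpt x τ n k s = v}

/-- `R_{lr}`: the minimax regret of the subpath `[x_l,x_r]` as assumed dominant part. -/
noncomputable def Rlr (x : ℕ → ℝ) (τ : ℝ) (wlo whi : ℕ → ℝ) (n k : ℕ) (l r : ℕ) : ℝ :=
  sInf {v : ℝ | ∃ t, l ≤ t ∧ t ≤ r ∧ Rsink x τ wlo whi n k l r t = v}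

/-- A partition of `{0,…,i}` into `q` consecutive nonempty blocks `{l p, …, r p}`. -/
def IsQPartition (q i : ℕ) (l r : ℕ → ℕ) : Prop :=
  l 1 = 0 ∧ r q = i ∧ (∀ p, 1 ≤ p → p < q → l (p + 1) = r p + 1) ∧
  (∀ p, 1 ≤ p → p ≤ q → l p ≤ r p)

/-- `M(q, i)`: the minimum over partitions of `{0,…,i}` into `q` consecutive
nonempty blocks of `max_p R_{l_p r_p}`. -/
noncomputable def Mreg (x : ℕ → ℝ) (τ : ℝ) (wlo whi : ℕ → ℝ) (n k : ℕ) (q i : ℕ) : ℝ :=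
  sInf {v : ℝ | ∃ lf rf : ℕ → ℕ, IsQPartition q i lf rf ∧
    maxOver (Finset.Icc 1 q) (fun p => Rlr x τ wlo whi n k (lf p) (rf p)) = v}

/-- Left-dominant scenario on `{l,…,r}`. -/
def LeftDominant (wlo whi s : ℕ → ℝ) (l r : ℕ) : Prop :=
  ∃ i, l ≤ i ∧ i ≤ r + 1 ∧ (∀ j, l ≤ j → j < i → s j = whi j) ∧
    (∀ j, i ≤ j → j ≤ r → s j = wlo j)

/-- Right-dominant scenario on `{l,…,r}`. -/
def RightDominant (wlo whi s : ℕ → ℝ) (l r : ℕ) : Prop :=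
  ∃ i, l ≤ i ∧ i ≤ r + 1 ∧ (∀ j, l ≤ j → j < i → s j = wlo j) ∧
    (∀ j, i ≤ j → j ≤ r → s j = whi j)


namespace Stmt13Aux

lemma maxOver_nonneg (S : Finset ℕ) (f : ℕ → ℝ) : 0 ≤ maxOver S f := by
  unfold maxOver
  rw [Finset.le_fold_max]
  exact Or.inl le_rfl

lemma le_maxOver {S : Finset ℕ} {f : ℕ → ℝ} {a : ℕ} (h : a ∈ S) : f a ≤ maxOver S f := by
  unfold maxOver
  rw [Finset.le_fold_max]
  exact Or.inr ⟨a, h, le_rfl⟩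

lemma maxOver_le {S : Finset ℕ} {f : ℕ → ℝ} {b : ℝ} (hb : 0 ≤ b) (h : ∀ a ∈ S, f a ≤ b) :
    maxOver S f ≤ b := by
  unfold maxOver
  rw [Finset.fold_max_le]
  exact ⟨hb, h⟩

lemma x_mono {n : ℕ} {x : ℕ → ℝ} (hx : ∀ i, i < n → x i < x (i + 1)) :
    ∀ {a b : ℕ}, a ≤ b → b ≤ n → x a ≤ x b := by
  intro a b hab
  induction b, hab using Nat.le_induction with
  | base => intro _; exact le_rfl
  | succ m ham ih => intro hm; exact (ih (by omega)).trans (hx m (by omega)).le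

section Pointwise

variable {n : ℕ} {x : ℕ → ℝ} {τ : ℝ} {s : ℕ → ℝ}

lemma thetaL_left (hxm : ∀ {a b : ℕ}, a ≤ b → b ≤ n → x a ≤ x b)
    (hs : ∀ j, j ≤ n → 0 ≤ s j) {l l' t : ℕ} (hl : l ≤ l') (ht : t ≤ n) :
    thetaL x τ s l' t ≤ thetaL x τ s l t := by
  refine maxOver_le (maxOver_nonneg _ _) fun a ha => ?_
  simp only [Finset.mem_Ico] at ha
  calc (x t - x a) * τ + ∑ j ∈ Finset.Icc l' a, s j
      ≤ (x t - x a) * τ + ∑ j ∈ Finset.Icc l a, s j := by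
        refine add_le_add_right (Finset.sum_le_sum_of_subset_of_nonneg
          (Finset.Icc_subset_Icc_left hl) fun j hj _ => hs j ?_) _
        have := (Finset.mem_Icc.mp hj).2
        omega
    _ ≤ thetaL x τ s l t :=
        le_maxOver (f := fun i => (x t - x i) * τ + ∑ j ∈ Finset.Icc l i, s j)
          (Finset.mem_Ico.mpr ⟨hl.trans ha.1, ha.2⟩)

lemma thetaL_sink (hxm : ∀ {a b : ℕ}, a ≤ b → b ≤ n → x a ≤ x b) (hτ : 0 ≤ τ)
    {l t t' : ℕ} (ht : t ≤ t') (ht' : t' ≤ n) :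
    thetaL x τ s l t ≤ thetaL x τ s l t' := by
  refine maxOver_le (maxOver_nonneg _ _) fun a ha => ?_
  simp only [Finset.mem_Ico] at ha
  calc (x t - x a) * τ + ∑ j ∈ Finset.Icc l a, s j
      ≤ (x t' - x a) * τ + ∑ j ∈ Finset.Icc l a, s j := by
        have hxx : x t ≤ x t' := hxm ht ht'
        nlinarith
    _ ≤ thetaL x τ s l t' :=
        le_maxOver (f := fun i => (x t' - x i) * τ + ∑ j ∈ Finset.Icc l i, s j)
          (Finset.mem_Ico.mpr ⟨ha.1, lt_of_lt_of_le ha.2 ht⟩)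

lemma thetaR_right (hs : ∀ j, j ≤ n → 0 ≤ s j) {t r : ℕ} (hr : r + 1 ≤ n) :
    thetaR x τ s t r ≤ thetaR x τ s t (r + 1) := by
  refine maxOver_le (maxOver_nonneg _ _) fun a ha => ?_
  simp only [Finset.mem_Ioc] at ha
  calc (x a - x t) * τ + ∑ j ∈ Finset.Icc a r, s j
      ≤ (x a - x t) * τ + ∑ j ∈ Finset.Icc a (r + 1), s j := by
        have hsub : Finset.Icc a r ⊆ Finset.Icc a (r + 1) :=
          Finset.Icc_subset_Icc_right (Nat.le_succ r)
        refine add_le_add_right (Finset.sum_le_sum_of_subset_of_nonneg hsub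
          fun j hj _ => hs j ?_) _
        have := (Finset.mem_Icc.mp hj).2
        omega
    _ ≤ thetaR x τ s t (r + 1) :=
        le_maxOver (f := fun i => (x i - x t) * τ + ∑ j ∈ Finset.Icc i (r + 1), s j)
          (Finset.mem_Ioc.mpr ⟨ha.1, by omega⟩)

lemma thetaR_sink (hxm : ∀ {a b : ℕ}, a ≤ b → b ≤ n → x a ≤ x b) (hτ : 0 ≤ τ)
    {t t' r : ℕ} (ht : t ≤ t') (ht' : t' ≤ n) :
    thetaR x τ s t' r ≤ thetaR x τ s t r := by
  refine maxOver_le (maxOver_nonneg _ _) fun a ha => ?_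
  simp only [Finset.mem_Ioc] at ha
  calc (x a - x t') * τ + ∑ j ∈ Finset.Icc a r, s j
      ≤ (x a - x t) * τ + ∑ j ∈ Finset.Icc a r, s j := by
        have hxx : x t ≤ x t' := hxm ht ht'
        nlinarith
    _ ≤ thetaR x τ s t r :=
        le_maxOver (f := fun i => (x i - x t) * τ + ∑ j ∈ Finset.Icc i r, s j)
          (Finset.mem_Ioc.mpr ⟨lt_of_le_of_lt ht ha.1, ha.2⟩)

lemma thetaL_self (l : ℕ) : thetaL x τ s l l = 0 := by
  simp [thetaL, maxOver]

lemma thetaR_self (t : ℕ) : thetaR x τ s t t = 0 := by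
  simp [thetaR, maxOver]

lemma theta1_nonneg (l t r : ℕ) : 0 ≤ theta1 x τ s l t r :=
  le_max_of_le_left (maxOver_nonneg _ _)

lemma theta1_mono_left (hxm : ∀ {a b : ℕ}, a ≤ b → b ≤ n → x a ≤ x b) (hτ : 0 ≤ τ)
    (hs : ∀ j, j ≤ n → 0 ≤ s j) {l l' t r : ℕ} (hl : l ≤ l') (hl'r : l' ≤ r)
    (ht2 : t ≤ r) (hr : r ≤ n) :
    theta1 x τ s l' (max t l') r ≤ theta1 x τ s l t r := by
  rcases le_or_gt l' t with h | h
  · rw [max_eq_left h]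
    exact max_le_max (thetaL_left hxm hs hl (le_trans ht2 hr)) le_rfl
  · rw [max_eq_right h.le]
    refine max_le ?_ ?_
    · rw [thetaL_self]
      exact theta1_nonneg _ _ _
    · exact le_max_of_le_right (thetaR_sink hxm hτ h.le (le_trans hl'r hr))

lemma theta1_mono_right (hxm : ∀ {a b : ℕ}, a ≤ b → b ≤ n → x a ≤ x b) (hτ : 0 ≤ τ)
    (hs : ∀ j, j ≤ n → 0 ≤ s j) {l t r : ℕ} (ht : l ≤ t) (htr : t ≤ r + 1)
    (hr : r + 1 ≤ n) :
    theta1 x τ s l (min t r) r ≤ theta1 x τ s l t (r + 1) := by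
  rcases le_or_gt t r with h | h
  · rw [min_eq_left h]
    exact max_le_max le_rfl (thetaR_right hs hr)
  · have ht' : t = r + 1 := by omega
    subst ht'
    rw [min_eq_right (by omega)]
    refine max_le ?_ ?_
    · exact le_max_of_le_left (thetaL_sink hxm hτ (by omega) hr)
    · rw [thetaR_self]
      exact theta1_nonneg _ _ _

lemma theta1_le_bound {wlo whi : ℕ → ℝ}
    (hxm : ∀ {a b : ℕ}, a ≤ b → b ≤ n → x a ≤ x b) (hτ : 0 ≤ τ)
    (hw : ∀ i, i ≤ n → 0 < wlo i ∧ wlo i ≤ whi i)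
    (hsc : IsScenario n wlo whi s) {l t r : ℕ} (hlt : l ≤ t) (htr : t ≤ r) (hr : r ≤ n) :
    theta1 x τ s l t r ≤ (x r - x l) * τ + ∑ j ∈ Finset.Icc l r, whi j := by
  have hwhi : ∀ j, j ≤ n → 0 ≤ whi j := fun j hj => ((hw j hj).1.le).trans (hw j hj).2
  have hK : 0 ≤ (x r - x l) * τ + ∑ j ∈ Finset.Icc l r, whi j := by
    refine add_nonneg (mul_nonneg (sub_nonneg.2 (hxm (hlt.trans htr) hr)) hτ)
      (Finset.sum_nonneg fun j hj => hwhi j ?_)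
    have := (Finset.mem_Icc.mp hj).2
    omega
  refine max_le (maxOver_le hK fun a ha => ?_) (maxOver_le hK fun a ha => ?_)
  · simp only [Finset.mem_Ico] at ha
    have h1 : (x t - x a) * τ ≤ (x r - x l) * τ := by
      have h2 : x t ≤ x r := hxm htr hr
      have h3 : x l ≤ x a := hxm ha.1 (by omega)
      nlinarith
    have h4 : ∑ j ∈ Finset.Icc l a, s j ≤ ∑ j ∈ Finset.Icc l r, whi j := by
      calc ∑ j ∈ Finset.Icc l a, s j ≤ ∑ j ∈ Finset.Icc l a, whi j :=
            Finset.sum_le_sum fun j hj => (hsc j (by have := (Finset.mem_Icc.mp hj).2; omega)).2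
        _ ≤ ∑ j ∈ Finset.Icc l r, whi j := by
            refine Finset.sum_le_sum_of_subset_of_nonneg
              (Finset.Icc_subset_Icc_right (by omega)) fun j hj _ => hwhi j ?_
            have := (Finset.mem_Icc.mp hj).2
            omega
    linarith
  · simp only [Finset.mem_Ioc] at ha
    have h1 : (x a - x t) * τ ≤ (x r - x l) * τ := by
      have h2 : x a ≤ x r := hxm ha.2 hr
      have h3 : x l ≤ x t := hxm hlt (htr.trans hr)
      nlinarith
    have h4 : ∑ j ∈ Finset.Icc a r, s j ≤ ∑ j ∈ Finset.Icc l r, whi j := by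
      calc ∑ j ∈ Finset.Icc a r, s j ≤ ∑ j ∈ Finset.Icc a r, whi j :=
            Finset.sum_le_sum fun j hj => (hsc j (by have := (Finset.mem_Icc.mp hj).2; omega)).2
        _ ≤ ∑ j ∈ Finset.Icc l r, whi j := by
            refine Finset.sum_le_sum_of_subset_of_nonneg
              (Finset.Icc_subset_Icc_left (by omega)) fun j hj _ => hwhi j ?_
            have := (Finset.mem_Icc.mp hj).2
            omega
    linarith

end Pointwise


section Regret

variable {n k : ℕ} {x : ℕ → ℝ} {τ : ℝ} {wlo whi : ℕ → ℝ}

lemma thetaOpt_nonneg (s : ℕ → ℝ) : 0 ≤ thetaOpt x τ n k s :=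
  Real.sInf_nonneg fun v hv => by
    obtain ⟨PY, hPY⟩ := hv
    exact hPY ▸ maxOver_nonneg _ _

lemma scenario_lo (hw : ∀ i, i ≤ n → 0 < wlo i ∧ wlo i ≤ whi i) :
    IsScenario n wlo whi wlo := fun i hi => ⟨le_rfl, (hw i hi).2⟩

lemma Rsink_le_Rsink (hxm : ∀ {a b : ℕ}, a ≤ b → b ≤ n → x a ≤ x b) (hτ : 0 ≤ τ)
    (hw : ∀ i, i ≤ n → 0 < wlo i ∧ wlo i ≤ whi i)
    {l1 t1 r1 l2 t2 r2 : ℕ} (hl2 : l2 ≤ t2) (ht2 : t2 ≤ r2) (hr2 : r2 ≤ n)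
    (H : ∀ s, IsScenario n wlo whi s → theta1 x τ s l1 t1 r1 ≤ theta1 x τ s l2 t2 r2) :
    Rsink x τ wlo whi n k l1 r1 t1 ≤ Rsink x τ wlo whi n k l2 r2 t2 := by
  have hbdd : BddAbove {v : ℝ | ∃ s, IsScenario n wlo whi s ∧
      theta1 x τ s l2 t2 r2 - thetaOpt x τ n k s = v} := by
    refine ⟨(x r2 - x l2) * τ + ∑ j ∈ Finset.Icc l2 r2, whi j, ?_⟩
    rintro v ⟨s, hsc, rfl⟩
    have h1 := theta1_le_bound hxm hτ hw hsc hl2 ht2 hr2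
    have h2 := thetaOpt_nonneg (x := x) (τ := τ) (n := n) (k := k) s
    show theta1 x τ s l2 t2 r2 - thetaOpt x τ n k s ≤ _
    linarith
  unfold Rsink
  refine csSup_le ⟨_, wlo, scenario_lo hw, rfl⟩ ?_
  rintro v ⟨s, hsc, rfl⟩
  have hle : theta1 x τ s l1 t1 r1 - thetaOpt x τ n k s ≤
      theta1 x τ s l2 t2 r2 - thetaOpt x τ n k s := sub_le_sub_right (H s hsc) _
  exact hle.trans (le_csSup hbdd ⟨s, hsc, rfl⟩)

lemma Rlr_le_Rlr {l1 r1 l2 r2 : ℕ} (hlr1 : l1 ≤ r1) (hlr2 : l2 ≤ r2)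
    (H : ∀ t, l2 ≤ t → t ≤ r2 → ∃ t', l1 ≤ t' ∧ t' ≤ r1 ∧
      Rsink x τ wlo whi n k l1 r1 t' ≤ Rsink x τ wlo whi n k l2 r2 t) :
    Rlr x τ wlo whi n k l1 r1 ≤ Rlr x τ wlo whi n k l2 r2 := by
  have hT1 : {v : ℝ | ∃ t, l1 ≤ t ∧ t ≤ r1 ∧ Rsink x τ wlo whi n k l1 r1 t = v} =
      (fun t => Rsink x τ wlo whi n k l1 r1 t) '' Set.Icc l1 r1 := by
    ext v
    simp [Set.mem_Icc, and_assoc]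
  have hbdd : BddBelow {v : ℝ | ∃ t, l1 ≤ t ∧ t ≤ r1 ∧ Rsink x τ wlo whi n k l1 r1 t = v} := by
    rw [hT1]
    exact ((Set.finite_Icc l1 r1).image _).bddBelow
  unfold Rlr
  refine le_csInf ⟨_, l2, le_rfl, hlr2, rfl⟩ ?_
  rintro v ⟨t, ht1, ht2, rfl⟩
  obtain ⟨t', h1, h2, h3⟩ := H t ht1 ht2
  exact (csInf_le hbdd ⟨t', h1, h2, rfl⟩).trans h3

lemma Rlr_anti_left (hxm : ∀ {a b : ℕ}, a ≤ b → b ≤ n → x a ≤ x b) (hτ : 0 ≤ τ)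
    (hw : ∀ i, i ≤ n → 0 < wlo i ∧ wlo i ≤ whi i)
    {l l' r : ℕ} (hl : l ≤ l') (hl'r : l' ≤ r) (hr : r ≤ n) :
    Rlr x τ wlo whi n k l' r ≤ Rlr x τ wlo whi n k l r := by
  refine Rlr_le_Rlr hl'r (hl.trans hl'r) fun t ht1 ht2 =>
    ⟨max t l', le_max_right _ _, max_le ht2 hl'r, ?_⟩
  refine Rsink_le_Rsink hxm hτ hw ht1 ht2 hr fun s hsc => ?_
  exact theta1_mono_left hxm hτ
    (fun j hj => ((hw j hj).1.trans_le (hsc j hj).1).le) hl hl'r ht2 hr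

lemma Rlr_mono_right (hxm : ∀ {a b : ℕ}, a ≤ b → b ≤ n → x a ≤ x b) (hτ : 0 ≤ τ)
    (hw : ∀ i, i ≤ n → 0 < wlo i ∧ wlo i ≤ whi i)
    {l r : ℕ} (hl : l ≤ r) (hr : r + 1 ≤ n) :
    Rlr x τ wlo whi n k l r ≤ Rlr x τ wlo whi n k l (r + 1) := by
  refine Rlr_le_Rlr hl (hl.trans (Nat.le_succ r)) fun t ht1 ht2 =>
    ⟨min t r, le_min ht1 hl, min_le_right _ _, ?_⟩
  refine Rsink_le_Rsink hxm hτ hw ht1 ht2 hr fun s hsc => ?_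
  exact theta1_mono_right hxm hτ
    (fun j hj => ((hw j hj).1.trans_le (hsc j hj).1).le) ht1 ht2 hr

end Regret

end Stmt13Aux

/-- the largest minimizing index `j` of
`max(M(q−1, j−1), R_{ji})` cannot decrease when `i` is incremented. -/
theorem stmt_13 (n k : ℕ) (x : ℕ → ℝ) (τ : ℝ) (wlo whi : ℕ → ℝ)
    (hx : ∀ i, i < n → x i < x (i + 1)) (hτ : 0 < τ)
    (hw : ∀ i, i ≤ n → 0 < wlo i ∧ wlo i ≤ whi i) (hk : 1 ≤ k)
    (q i j' j'' : ℕ) (hq : 2 ≤ q) (hi1 : q ≤ i) (hi2 : i ≤ n)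
    (hj'lb : q - 1 ≤ j') (hj'le : j' ≤ i - 1)
    (hj'min : ∀ j, q - 1 ≤ j → j ≤ i - 1 →
      max (Mreg x τ wlo whi n k (q - 1) (j' - 1)) (Rlr x τ wlo whi n k j' (i - 1)) ≤
      max (Mreg x τ wlo whi n k (q - 1) (j - 1)) (Rlr x τ wlo whi n k j (i - 1)))
    (hj'big : ∀ j, q - 1 ≤ j → j ≤ i - 1 →
      max (Mreg x τ wlo whi n k (q - 1) (j - 1)) (Rlr x τ wlo whi n k j (i - 1)) =
        max (Mreg x τ wlo whi n k (q - 1) (j' - 1)) (Rlr x τ wlo whi n k j' (i - 1)) →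
      j ≤ j')
    (hj''lb : q - 1 ≤ j'') (hj''le : j'' ≤ i)
    (hj''min : ∀ j, q - 1 ≤ j → j ≤ i →
      max (Mreg x τ wlo whi n k (q - 1) (j'' - 1)) (Rlr x τ wlo whi n k j'' i) ≤
      max (Mreg x τ wlo whi n k (q - 1) (j - 1)) (Rlr x τ wlo whi n k j i))
    (hj''big : ∀ j, q - 1 ≤ j → j ≤ i →
      max (Mreg x τ wlo whi n k (q - 1) (j - 1)) (Rlr x τ wlo whi n k j i) =
        max (Mreg x τ wlo whi n k (q - 1) (j'' - 1)) (Rlr x τ wlo whi n k j'' i) →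
      j ≤ j'') :
    j' ≤ j'' := by
  by_contra hcon
  push_neg at hcon
  have hxm : ∀ {a b : ℕ}, a ≤ b → b ≤ n → x a ≤ x b := Stmt13Aux.x_mono hx
  have hτ' : (0:ℝ) ≤ τ := hτ.le
  have hii : i - 1 + 1 = i := by omega
  have hBC : Rlr x τ wlo whi n k j'' (i - 1) ≤ Rlr x τ wlo whi n k j'' i := by
    have h := Stmt13Aux.Rlr_mono_right (k := k) hxm hτ' hw
      (l := j'') (r := i - 1) (by omega) (by omega)
    rwa [hii] at h
  have hCC : Rlr x τ wlo whi n k j' i ≤ Rlr x τ wlo whi n k j'' i :=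
    Stmt13Aux.Rlr_anti_left (k := k) hxm hτ' hw hcon.le (by omega) hi2
  have h1 := hj'min j'' hj''lb (by omega)
  have h4 := hj''min j' hj'lb (by omega)
  have hA : Mreg x τ wlo whi n k (q - 1) (j' - 1) ≤
      max (Mreg x τ wlo whi n k (q - 1) (j'' - 1)) (Rlr x τ wlo whi n k j'' i) := by
    calc Mreg x τ wlo whi n k (q - 1) (j' - 1)
        ≤ max (Mreg x τ wlo whi n k (q - 1) (j' - 1))
            (Rlr x τ wlo whi n k j' (i - 1)) := le_max_left _ _
      _ ≤ max (Mreg x τ wlo whi n k (q - 1) (j'' - 1))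
            (Rlr x τ wlo whi n k j'' (i - 1)) := h1
      _ ≤ max (Mreg x τ wlo whi n k (q - 1) (j'' - 1))
            (Rlr x τ wlo whi n k j'' i) := max_le_max le_rfl hBC
  have heq : max (Mreg x τ wlo whi n k (q - 1) (j' - 1)) (Rlr x τ wlo whi n k j' i) =
      max (Mreg x τ wlo whi n k (q - 1) (j'' - 1)) (Rlr x τ wlo whi n k j'' i) :=
    le_antisymm (max_le hA (hCC.trans (le_max_right _ _))) h4
  have := hj''big j' hj'lb (by omega) heq
  omega
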